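/- arXiv:2102.10933 — 5 statements merged into one kernel-verified Lean document; each statement's English description precedes it below -/
import Mathlib

section
/- Assume ω > 0, ε ≥ 0, β ≠ 0 and β·(α(ω+ε) − ωε) ≤ 0. Then the origin (0,0,0,0) is the unique equilibrium of the Hamiltonian vector field F, i.e. the zero set of F equals {(0,0,0,0)}. -/
/-- The Hamiltonian vector field of
`H(x,y,p_x,p_y) = (p_x² + p_y²)/2 − (α/2)x² + (β/4)x⁴ + (ω/2)y² + (ε/2)(x−y)²`,
`F(x,y,p_x,p_y) = (p_x, p_y, αx − βx³ + ε(y−x), −ωy + ε(x−y))`. -/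
noncomputable def F (α β ω ε : ℝ) (p : ℝ × ℝ × ℝ × ℝ) : ℝ × ℝ × ℝ × ℝ :=
  (p.2.2.1, p.2.2.2,
   α * p.1 - β * p.1 ^ 3 + ε * (p.2.1 - p.1),
   -ω * p.2.1 + ε * (p.1 - p.2.1))

theorem zero_set_eq_origin (α β ω ε : ℝ)
    (hω : 0 < ω) (hε : 0 ≤ ε) (hβ : β ≠ 0)
    (h : β * (α * (ω + ε) - ω * ε) ≤ 0) :
    {p : ℝ × ℝ × ℝ × ℝ | F α β ω ε p = (0, 0, 0, 0)} =
      {((0 : ℝ), (0 : ℝ), (0 : ℝ), (0 : ℝ))} := by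
  ext ⟨x, y, px, py⟩
  simp only [F, Set.mem_setOf_eq, Set.mem_singleton_iff, Prod.mk.injEq]
  constructor
  · rintro ⟨h1, h2, h3, h4⟩
    have key : x * (α * (ω + ε) - ω * ε) = β * (ω + ε) * x ^ 3 := by
      linear_combination (ω + ε) * h3 + ε * h4
    have key2 : β ^ 2 * (ω + ε) * x ^ 4 = x ^ 2 * (β * (α * (ω + ε) - ω * ε)) := by
      linear_combination -β * x * key
    have hle : x ^ 2 * (β * (α * (ω + ε) - ω * ε)) ≤ 0 :=
      mul_nonpos_of_nonneg_of_nonpos (sq_nonneg x) h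
    have hpos : 0 < β ^ 2 * (ω + ε) := by positivity
    have hx4 : x ^ 4 ≤ 0 := by
      by_contra hc
      push_neg at hc
      nlinarith [mul_pos hpos hc]
    have hx : x = 0 := by
      have h40 : x ^ 4 = 0 := le_antisymm hx4 (by positivity)
      exact pow_eq_zero_iff (by norm_num) |>.mp h40
    have hy : y = 0 := by
      have : (ω + ε) * y = 0 := by rw [hx] at h4; linarith
      have hωε : ω + ε ≠ 0 := by positivity
      exact (mul_eq_zero.mp this).resolve_left hωε
    exact ⟨hx, hy, h1, h2⟩
  · rintro ⟨hx, hy, h1, h2⟩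
    subst hx hy h1 h2
    norm_num
end

section
/- Assume ω > 0, ε ≥ 0, and α(ω+ε) > ωε. Then the Jacobian of the Hamiltonian vector field F at the origin has exactly two nonzero real eigenvalues, namely ±√λ₁, and two purely imaginary eigenvalues, namely ±i√(−λ₂), where λ₁ = ((α − ω − 2ε) + √((α+ω)² + 4ε²))/2 > 0 and λ₂ = ((α − ω − 2ε) − √((α+ω)² + 4ε²))/2 < 0; that is, the origin is a saddle-centre equilibrium. -/
/-- Jacobian of the Hamiltonian vector field
`F(x,y,p_x,p_y) = (p_x, p_y, αx − βx³ + ε(y−x), −ωy + ε(x−y))`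
at the origin. -/
noncomputable def JacOrigin (α ω ε : ℝ) : Matrix (Fin 4) (Fin 4) ℝ :=
  !![0, 0, 1, 0;
     0, 0, 0, 1;
     α - ε, ε, 0, 0;
     ε, -ω - ε, 0, 0]

lemma jac_det (α ω ε : ℝ) (μ : ℂ) :
    (μ • (1 : Matrix (Fin 4) (Fin 4) ℂ) - (JacOrigin α ω ε).map Complex.ofReal).det
    = μ^4 - (α - ω - 2*ε)*μ^2 + ((α-ε)*(-ω-ε) - ε^2) := by
  have h32 : (2 : Fin 4).succAbove (2 : Fin 3) = 3 := by decide
  have : μ • (1 : Matrix (Fin 4) (Fin 4) ℂ) - (JacOrigin α ω ε).map Complex.ofReal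
      = !![μ, 0, -1, 0; 0, μ, 0, -1; -(α-ε:ℝ), -(ε:ℝ), μ, 0; -(ε:ℝ), -(-ω-ε:ℝ), 0, μ] := by
    ext i j
    fin_cases i <;> fin_cases j <;>
      simp [JacOrigin, Matrix.one_apply, Matrix.vecHead, Matrix.vecTail]
  rw [this]
  simp [Matrix.det_succ_row_zero, Fin.sum_univ_succ, h32]
  push_cast
  ring

theorem origin_saddle_centre (α ω ε : ℝ) (hω : 0 < ω) (hε : 0 ≤ ε)
    (h : ω * ε < α * (ω + ε)) (l1 l2 : ℝ)
    (hl1 : l1 = ((α - ω - 2 * ε) + Real.sqrt ((α + ω) ^ 2 + 4 * ε ^ 2)) / 2)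
    (hl2 : l2 = ((α - ω - 2 * ε) - Real.sqrt ((α + ω) ^ 2 + 4 * ε ^ 2)) / 2) :
    0 < l1 ∧ l2 < 0 ∧
    spectrum ℂ ((JacOrigin α ω ε).map (Complex.ofReal)) =
      {(Real.sqrt l1 : ℂ), -(Real.sqrt l1 : ℂ),
       Complex.I * (Real.sqrt (-l2) : ℂ), -(Complex.I * (Real.sqrt (-l2) : ℂ))} := by
  set D : ℝ := (α + ω) ^ 2 + 4 * ε ^ 2 with hD
  have hD0 : 0 ≤ D := by positivity
  have hs : 0 ≤ Real.sqrt D := Real.sqrt_nonneg D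
  have hs2 : Real.sqrt D ^ 2 = D := Real.sq_sqrt hD0
  have h1 : 0 < l1 := by
    rw [hl1]
    nlinarith [hs, hs2, h, sq_nonneg (Real.sqrt D + (ω + 2*ε - α)),
      sq_nonneg (Real.sqrt D - (ω + 2*ε - α))]
  have h2 : l2 < 0 := by
    rw [hl2]
    nlinarith [hs, hs2, h, sq_nonneg (Real.sqrt D + (α - ω - 2*ε)),
      sq_nonneg (Real.sqrt D - (α - ω - 2*ε))]
  refine ⟨h1, h2, ?_⟩
  have hsum : l1 + l2 = α - ω - 2*ε := by rw [hl1, hl2]; ring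
  have hprod : l1 * l2 = (α-ε)*(-ω-ε) - ε^2 := by
    rw [hl1, hl2]
    have hD2 : D = (α + ω) ^ 2 + 4 * ε ^ 2 := hD
    nlinarith [hs2]
  have hr2 : ((Real.sqrt l1 : ℝ) : ℂ)^2 = (l1 : ℂ) := by
    rw [← Complex.ofReal_pow, Real.sq_sqrt h1.le]
  have hit2 : (Complex.I * (Real.sqrt (-l2) : ℂ))^2 = (l2 : ℂ) := by
    have : ((Real.sqrt (-l2) : ℝ) : ℂ)^2 = ((-l2 : ℝ) : ℂ) := by
      rw [← Complex.ofReal_pow, Real.sq_sqrt (by linarith)]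
    rw [mul_pow, Complex.I_sq, this]
    push_cast
    ring
  have hsumC : (l1 : ℂ) + l2 = (α : ℂ) - ω - 2*ε := by exact_mod_cast hsum
  have hprodC : (l1 : ℂ) * l2 = ((α:ℂ)-ε)*(-(ω:ℂ)-ε) - (ε:ℂ)^2 := by
    exact_mod_cast hprod
  ext μ
  rw [spectrum.mem_iff, Matrix.isUnit_iff_isUnit_det, isUnit_iff_ne_zero, not_ne_iff,
    Algebra.algebraMap_eq_smul_one, jac_det]
  have hfact : μ^4 - ((α:ℂ) - ω - 2*ε)*μ^2 + (((α:ℂ)-ε)*(-(ω:ℂ)-ε) - (ε:ℂ)^2)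
      = (μ - Real.sqrt l1) * (μ + Real.sqrt l1) *
        (μ - Complex.I * Real.sqrt (-l2)) * (μ + Complex.I * Real.sqrt (-l2)) := by
    linear_combination (μ^2 - (Complex.I * ((Real.sqrt (-l2) : ℝ) : ℂ))^2) * hr2 +
      (μ^2 - (l1:ℂ)) * hit2 + (μ^2 : ℂ) * hsumC - hprodC
  rw [hfact]
  simp only [Set.mem_insert_iff, Set.mem_singleton_iff, mul_eq_zero, sub_eq_zero,
    add_eq_zero_iff_eq_neg]
  tauto
end

section
/- Assume ω > 0, ε ≥ 0, and α(ω+ε) < ωε. Then all four eigenvalues of the Jacobian of the Hamiltonian vector field F at the origin are purely imaginary, namely ±i√(−λ₁) and ±i√(−λ₂), where λ₁ = ((α − ω − 2ε) + √((α+ω)² + 4ε²))/2 < 0 and λ₂ = ((α − ω − 2ε) − √((α+ω)² + 4ε²))/2 < 0; that is, the origin is a centre-centre equilibrium. -/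
theorem origin_centre_centre (α ω ε : ℝ) (hω : 0 < ω) (hε : 0 ≤ ε)
    (h : α * (ω + ε) < ω * ε) (l1 l2 : ℝ)
    (hl1 : l1 = ((α - ω - 2 * ε) + Real.sqrt ((α + ω) ^ 2 + 4 * ε ^ 2)) / 2)
    (hl2 : l2 = ((α - ω - 2 * ε) - Real.sqrt ((α + ω) ^ 2 + 4 * ε ^ 2)) / 2) :
    l1 < 0 ∧ l2 < 0 ∧
    spectrum ℂ ((JacOrigin α ω ε).map (Complex.ofReal)) =
      {Complex.I * (Real.sqrt (-l1) : ℂ), -(Complex.I * (Real.sqrt (-l1) : ℂ)),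
       Complex.I * (Real.sqrt (-l2) : ℂ), -(Complex.I * (Real.sqrt (-l2) : ℂ))} := by
  have hS : (0:ℝ) ≤ (α + ω) ^ 2 + 4 * ε ^ 2 := by positivity
  set s := Real.sqrt ((α + ω) ^ 2 + 4 * ε ^ 2) with hs
  have hs0 : 0 ≤ s := Real.sqrt_nonneg _
  have hs2 : s ^ 2 = (α + ω) ^ 2 + 4 * ε ^ 2 := Real.sq_sqrt hS
  have hωε : (0:ℝ) < ω + ε := by linarith
  have hpos : 0 < ω + 2*ε - α := by nlinarith [mul_pos hωε hω, mul_nonneg hε hωε.le]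
  have hlt : s^2 < (ω + 2*ε - α)^2 := by nlinarith
  have hslt : s < ω + 2*ε - α := by nlinarith
  have h1 : l1 < 0 := by rw [hl1]; linarith
  have h2 : l2 < 0 := by
    rw [hl2]; rw [hl1] at h1; linarith
  refine ⟨h1, h2, ?_⟩
  -- sum and product of the roots
  have e1 : (l1:ℂ) + l2 = (α:ℂ) - ω - 2*ε := by
    rw [hl1, hl2]; push_cast; ring
  have e2r : l1 * l2 = (α - ε) * (-ω - ε) - ε^2 := by
    rw [hl1, hl2]; linear_combination (-(1:ℝ)/4) * hs2
  have e2 : (l1:ℂ) * l2 = ((α:ℂ) - ε) * (-(ω:ℂ) - ε) - (ε:ℂ)^2 := by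
    rw [← Complex.ofReal_mul, e2r]; push_cast; ring
  set a : ℂ := Complex.I * (Real.sqrt (-l1) : ℂ) with ha
  set b : ℂ := Complex.I * (Real.sqrt (-l2) : ℂ) with hb
  have c1 : a ^ 2 = (l1 : ℂ) := by
    rw [ha, mul_pow, Complex.I_sq, ← Complex.ofReal_pow,
      Real.sq_sqrt (by linarith : (0:ℝ) ≤ -l1)]
    push_cast; ring
  have c2 : b ^ 2 = (l2 : ℂ) := by
    rw [hb, mul_pow, Complex.I_sq, ← Complex.ofReal_pow,
      Real.sq_sqrt (by linarith : (0:ℝ) ≤ -l2)]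
    push_cast; ring
  have hdet : ∀ z : ℂ,
      (algebraMap ℂ (Matrix (Fin 4) (Fin 4) ℂ) z - (JacOrigin α ω ε).map Complex.ofReal).det
        = (z - a) * (z + a) * ((z - b) * (z + b)) := by
    intro z
    have hM : algebraMap ℂ (Matrix (Fin 4) (Fin 4) ℂ) z - (JacOrigin α ω ε).map Complex.ofReal
        = !![z, 0, -1, 0; 0, z, 0, -1; (ε:ℂ) - α, -(ε:ℂ), z, 0; -(ε:ℂ), (ω:ℂ) + ε, 0, z] := by
      ext i j
      fin_cases i <;> fin_cases j <;>
        simp [JacOrigin, Matrix.algebraMap_matrix_apply, Matrix.vecHead, Matrix.vecTail] <;> push_cast <;> ring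
    rw [hM]
    simp [Matrix.det_succ_row_zero, Fin.sum_univ_succ, Fin.succAbove,
      Matrix.submatrix_apply]
    linear_combination (z^2) * e1 - e2 + (z^2 - b^2) * c1 + (z^2 - (l1:ℂ)) * c2
  ext z
  rw [spectrum.mem_iff, Matrix.isUnit_iff_isUnit_det, isUnit_iff_ne_zero, not_ne_iff, hdet z]
  simp only [Set.mem_insert_iff, Set.mem_singleton_iff, mul_eq_zero, sub_eq_zero,
    add_eq_zero_iff_eq_neg]
  tauto
end

section
/- Assume ω > 0, ε ≥ 0, β ≠ 0 and β·(α(ω+ε) − ωε) > 0, and set x^e = √((α − ωε/(ω+ε))/β), y^e = (ε/(ω+ε))·x^e. Then the characteristic polynomial of the Jacobian of the Hamiltonian vector field F evaluated at (±x^e, ±y^e, 0, 0) factors as (t² − λ₃)(t² − λ₄), where λ₃ = (−2α − (ω² + 2ε²)/(ω+ε) + √((2α − ω − 3ωε/(ω+ε))² + 4ε²))/2 and λ₄ = (−2α − (ω² + 2ε²)/(ω+ε) − √((2α − ω − 3ωε/(ω+ε))² + 4ε²))/2. -/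
open Polynomial

/-- Jacobian of the Hamiltonian vector field
`F(x,y,p_x,p_y) = (p_x, p_y, αx − βx³ + ε(y−x), −ωy + ε(x−y))`
at a point with first coordinate `x`. -/
noncomputable def Jac (α β ω ε x : ℝ) : Matrix (Fin 4) (Fin 4) ℝ :=
  !![0, 0, 1, 0;
     0, 0, 0, 1;
     α - ε - 3 * β * x ^ 2, ε, 0, 0;
     ε, -ω - ε, 0, 0]

lemma charpoly_aux (a d e : ℝ) :
    (!![0,0,1,0;0,0,0,1;a,e,0,0;e,d,0,0] : Matrix (Fin 4) (Fin 4) ℝ).charpoly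
      = X^4 - C (a+d) * X^2 + C (a*d - e*e) := by
  rw [Matrix.charpoly]
  simp [Matrix.det_succ_row_zero, Matrix.charmatrix_apply, Matrix.one_apply,
    Fin.sum_univ_succ, Matrix.det_fin_three, Matrix.diagonal_apply, Fin.succAbove]
  ring

theorem charpoly_at_nontrivial_equilibria (α β ω ε : ℝ)
    (hω : 0 < ω) (hε : 0 ≤ ε) (hβ : β ≠ 0)
    (h : 0 < β * (α * (ω + ε) - ω * ε))
    (xe ye : ℝ)
    (hxe : xe = Real.sqrt ((α - ω * ε / (ω + ε)) / β))
    (hye : ye = ε / (ω + ε) * xe)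
    (l3 l4 : ℝ)
    (hl3 : l3 = (-2 * α - (ω ^ 2 + 2 * ε ^ 2) / (ω + ε)
        + Real.sqrt ((2 * α - ω - 3 * ω * ε / (ω + ε)) ^ 2 + 4 * ε ^ 2)) / 2)
    (hl4 : l4 = (-2 * α - (ω ^ 2 + 2 * ε ^ 2) / (ω + ε)
        - Real.sqrt ((2 * α - ω - 3 * ω * ε / (ω + ε)) ^ 2 + 4 * ε ^ 2)) / 2) :
    (Jac α β ω ε xe).charpoly = (X ^ 2 - C l3) * (X ^ 2 - C l4) ∧
    (Jac α β ω ε (-xe)).charpoly = (X ^ 2 - C l3) * (X ^ 2 - C l4) := by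
  have hωε : (0:ℝ) < ω + ε := by linarith
  have hne : ω + ε ≠ 0 := ne_of_gt hωε
  -- value of xe²
  have harg : 0 ≤ (α - ω * ε / (ω + ε)) / β := by
    rcases lt_trichotomy β 0 with hb | hb | hb
    · have hlt : α * (ω + ε) - ω * ε < 0 := by
        by_contra hc
        push_neg at hc
        nlinarith
      have hnum : α - ω * ε / (ω + ε) < 0 := by
        have : α < ω * ε / (ω + ε) := (lt_div_iff₀ hωε).mpr (by nlinarith)
        linarith
      exact le_of_lt (div_pos_of_neg_of_neg hnum hb)
    · exact absurd hb hβ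
    · have : 0 < α * (ω + ε) - ω * ε := by nlinarith
      have hnum : 0 < α - ω * ε / (ω + ε) := by
        have : ω * ε / (ω + ε) < α := (div_lt_iff₀ hωε).mpr (by nlinarith)
        linarith
      positivity
  have hx2 : xe ^ 2 = (α - ω * ε / (ω + ε)) / β := by
    rw [hxe, Real.sq_sqrt harg]
  have hbx2 : β * xe ^ 2 = α - ω * ε / (ω + ε) := by
    rw [hx2, mul_div_cancel₀ _ hβ]
  -- abbreviations
  set a : ℝ := α - ε - 3 * β * xe ^ 2 with ha
  set d : ℝ := -ω - ε with hd
  have ha' : a = -2*α - ε + 3 * (ω * ε / (ω + ε)) := by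
    rw [ha]; nlinarith [hbx2]
  -- sqrt squared
  have hs : Real.sqrt ((2 * α - ω - 3 * ω * ε / (ω + ε)) ^ 2 + 4 * ε ^ 2) ^ 2
      = (2 * α - ω - 3 * ω * ε / (ω + ε)) ^ 2 + 4 * ε ^ 2 := by
    rw [Real.sq_sqrt]; positivity
  -- coefficient identities
  have hsum : a + d = l3 + l4 := by
    rw [hl3, hl4, ha', hd]
    field_simp
    ring
  have hprod : a * d - ε * ε = l3 * l4 := by
    rw [hl3, hl4, ha', hd]
    rw [div_mul_div_comm]
    rw [show ∀ u v : ℝ, (u + v) * (u - v) = u^2 - v^2 by intro u v; ring, hs]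
    field_simp
    ring
  have key : ∀ x : ℝ, x ^ 2 = xe ^ 2 →
      (Jac α β ω ε x).charpoly = (X ^ 2 - C l3) * (X ^ 2 - C l4) := by
    intro x hx
    have : Jac α β ω ε x = !![0,0,1,0;0,0,0,1;a,ε,0,0;ε,d,0,0] := by
      rw [Jac, hx, ha, hd]
    rw [this, charpoly_aux, hsum, hprod]
    rw [C_add, C_mul]
    ring
  exact ⟨key xe rfl, key (-xe) (by ring)⟩
end

section
/- Assume ω > 0 and ε ≥ 0, and let λ₃ = (−2α − (ω² + 2ε²)/(ω+ε) + √((2α − ω − 3ωε/(ω+ε))² + 4ε²))/2 and λ₄ = (−2α − (ω² + 2ε²)/(ω+ε) − √((2α − ω − 3ωε/(ω+ε))² + 4ε²))/2. Then λ₃·λ₄ = 2(α(ω+ε) − ωε), and λ₄ < 0 for every α ∈ ℝ. Consequently, if α(ω+ε) > ωε then λ₃ < 0 (so the nontrivial equilibria are centre-centre), while if α(ω+ε) < ωε then λ₃ > 0 (so the nontrivial equilibria are saddle-centre). -/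
theorem lambda3_lambda4_signs (ω ε : ℝ) (hω : 0 < ω) (hε : 0 ≤ ε) (α : ℝ)
    (l3 l4 : ℝ)
    (hl3 : l3 = (-2 * α - (ω ^ 2 + 2 * ε ^ 2) / (ω + ε)
        + Real.sqrt ((2 * α - ω - 3 * ω * ε / (ω + ε)) ^ 2 + 4 * ε ^ 2)) / 2)
    (hl4 : l4 = (-2 * α - (ω ^ 2 + 2 * ε ^ 2) / (ω + ε)
        - Real.sqrt ((2 * α - ω - 3 * ω * ε / (ω + ε)) ^ 2 + 4 * ε ^ 2)) / 2) :
    l3 * l4 = 2 * (α * (ω + ε) - ω * ε) ∧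
    l4 < 0 ∧
    (ω * ε < α * (ω + ε) → l3 < 0) ∧
    (α * (ω + ε) < ω * ε → 0 < l3) := by
  have hc : 0 < ω + ε := by linarith
  set B := 2 * α - ω - 3 * ω * ε / (ω + ε) with hB
  set A := 2 * α + (ω ^ 2 + 2 * ε ^ 2) / (ω + ε) with hA
  set s := Real.sqrt (B ^ 2 + 4 * ε ^ 2) with hs
  clear_value A B s
  have hss : s ^ 2 = B ^ 2 + 4 * ε ^ 2 := by rw [hs]; exact Real.sq_sqrt (by positivity)
  have hsB : |B| ≤ s := by
    rw [hs, ← Real.sqrt_sq_eq_abs]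
    exact Real.sqrt_le_sqrt (by nlinarith [sq_nonneg ε])
  have hAB : A - B = 2 * (ω + ε) := by
    rw [hA, hB]; field_simp; ring
  have hApos : 0 < A + s := by
    have h1 := abs_nonneg B
    have h2 := neg_abs_le B
    linarith
  have hl3' : l3 = (-A + s) / 2 := by rw [hl3, hA]; ring
  have hl4' : l4 = (-A - s) / 2 := by rw [hl4, hA]; ring
  have hprod : l3 * l4 = 2 * (α * (ω + ε) - ω * ε) := by
    have h1 : l3 * l4 = (A ^ 2 - s ^ 2) / 4 := by rw [hl3', hl4']; ring
    rw [h1, hss, hA, hB]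
    field_simp
    ring
  have hl4neg : l4 < 0 := by rw [hl4']; linarith
  refine ⟨hprod, hl4neg, ?_, ?_⟩
  · intro h
    by_contra h3
    push_neg at h3
    nlinarith
  · intro h
    by_contra h3
    push_neg at h3
    nlinarith
end
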